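/- Let p be an odd prime, let a ∈ ℤ/p be a non-square modulo p, and let φ = [[0,1],[a,0]] ∈ GL(2,p). Let C be the centralizer of φ in GL(2,p) and let S = {ψ ∈ GL(2,p) : ψ² = φ²}. Then the action of C on S by conjugation has exactly p orbits; the orbits of φ and of −φ are singletons, and each of the remaining p − 2 orbits has exactly p + 1 elements. -/

import Mathlib

set_option linter.unreachableTactic false
set_option linter.unusedTactic false
set_option linter.unnecessarySimpa false
set_option maxHeartbeats 1000000
open Matrix

namespace ConjOrb
variable {F : Type*} [Field F]

/-- The invariant `U(P) = (P₁₀ + a P₀₁)/(2a)`. -/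
def Uf (a : F) (P : Matrix (Fin 2) (Fin 2) F) : F := (P 1 0 + a * P 0 1) / (2 * a)

lemma nsq {a : F} (ha : ∀ b : F, b ^ 2 ≠ a) {x y : F} (h : x ^ 2 = a * y ^ 2) :
    x = 0 ∧ y = 0 := by
  rcases eq_or_ne y 0 with hy | hy
  · subst hy
    refine ⟨?_, rfl⟩
    have hx : x ^ 2 = 0 := by rw [h]; ring
    exact pow_eq_zero_iff (two_ne_zero) |>.mp hx
  · exact absurd (by field_simp; linear_combination h) (ha (x / y))

lemma ha0 {a : F} (ha : ∀ b : F, b ^ 2 ≠ a) : a ≠ 0 := fun h => ha 0 (by simp [h])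

lemma sqLemma {a u k t : F} (h : k ^ 2 - a * t ^ 2 = a * (1 - u ^ 2)) :
    !![k, u + t; a * (u - t), -k] * !![k, u + t; a * (u - t), -k] = !![a, 0; 0, a] := by
  ext i j
  fin_cases i <;> fin_cases j <;>
    simp [Matrix.mul_apply, Fin.sum_univ_two] <;>
    (first | ring1 | linear_combination h | linear_combination -h | linear_combination 2*h | linear_combination -2*h)

lemma detLemma {a u k t : F} (h : k ^ 2 - a * t ^ 2 = a * (1 - u ^ 2)) :
    (!![k, u + t; a * (u - t), -k]).det = -a := by
  rw [Matrix.det_fin_two_of]; linear_combination -h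

lemma ULemma {a u k t : F} (h2 : (2 : F) ≠ 0) (han : a ≠ 0) :
    Uf a !![k, u + t; a * (u - t), -k] = u := by
  simp only [Uf]
  rw [div_eq_iff (by exact mul_ne_zero h2 han)]
  simp
  ring


/-- Normal form of a square root of `a • 1`. -/
lemma normalForm {a : F} (ha : ∀ b : F, b ^ 2 ≠ a) (h2 : (2 : F) ≠ 0)
    {P : Matrix (Fin 2) (Fin 2) F} (hP : P * P = !![a, 0; 0, a]) :
    ∃ k t u : F, P = !![k, u + t; a * (u - t), -k] ∧
      k ^ 2 - a * t ^ 2 = a * (1 - u ^ 2) ∧ Uf a P = u := by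
  have han : a ≠ 0 := ha0 ha
  have e00 : P 0 0 * P 0 0 + P 0 1 * P 1 0 = a := by
    have := congrFun (congrFun hP 0) 0
    simpa [Matrix.mul_apply, Fin.sum_univ_two] using this
  have e01 : P 0 0 * P 0 1 + P 0 1 * P 1 1 = 0 := by
    have := congrFun (congrFun hP 0) 1
    simpa [Matrix.mul_apply, Fin.sum_univ_two] using this
  have e10 : P 1 0 * P 0 0 + P 1 1 * P 1 0 = 0 := by
    have := congrFun (congrFun hP 1) 0
    simpa [Matrix.mul_apply, Fin.sum_univ_two] using this
  have htr : P 1 1 = -(P 0 0) := by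
    by_contra hne
    have hs : P 0 0 + P 1 1 ≠ 0 := fun h => hne (by linear_combination h)
    have hl : P 0 1 = 0 := by
      have h' : P 0 1 * (P 0 0 + P 1 1) = 0 := by linear_combination e01
      exact (mul_eq_zero.mp h').resolve_right hs
    have hm : P 1 0 = 0 := by
      have h' : P 1 0 * (P 0 0 + P 1 1) = 0 := by linear_combination e10
      exact (mul_eq_zero.mp h').resolve_right hs
    exact ha (P 0 0) (by rw [sq]; linear_combination e00 - hl * P 1 0)
  have h2a : (2 : F) * a ≠ 0 := mul_ne_zero h2 han
  set u : F := Uf a P with hu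
  have huu : u * (2 * a) = P 1 0 + a * P 0 1 := div_mul_cancel₀ _ h2a
  refine ⟨P 0 0, P 0 1 - u, u, ?_, ?_, rfl⟩
  · ext i j
    fin_cases i <;> fin_cases j <;> simp <;>
      (first | ring1 | exact htr | linear_combination huu | linear_combination -huu)
  · linear_combination e00 + (P 0 1) * huu
    
/-- conjugation invariance of U. -/
lemma U_conj {a : F} {G G' P : Matrix (Fin 2) (Fin 2) F}
    (hGM : G * !![0, 1; a, 0] = !![0, 1; a, 0] * G) (hGG' : G' * G = 1) :
    Uf a (G * P * G') = Uf a P := by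
  have key : (!![0, 1; a, 0] * (G * P * G')).trace = (!![0, 1; a, 0] * P).trace := by
    calc (!![0, 1; a, 0] * (G * P * G')).trace
        = ((!![0, 1; a, 0] * G * P) * G').trace := by rw [← Matrix.mul_assoc, ← Matrix.mul_assoc]
      _ = (G' * (!![0, 1; a, 0] * G * P)).trace := trace_mul_comm _ _
      _ = (G' * G * (!![0, 1; a, 0] * P)).trace := by
            rw [show G' * (!![0, 1; a, 0] * G * P) = G' * G * (!![0, 1; a, 0] * P) from by
              rw [← hGM]; simp only [Matrix.mul_assoc]]
      _ = (!![0, 1; a, 0] * P).trace := by rw [hGG', Matrix.one_mul]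
  have tfun : ∀ Q : Matrix (Fin 2) (Fin 2) F,
      Uf a Q = (!![0, 1; a, 0] * Q).trace / (2 * a) := by
    intro Q
    rw [Matrix.eta_fin_two Q]
    simp [Uf, Matrix.trace_fin_two, Matrix.mul_fin_two]
  rw [tfun, tfun, key]

/-- Existence of a conjugating centralizer element between two square roots with the same U. -/
lemma conjExists {a : F} (ha : ∀ b : F, b ^ 2 ≠ a) (h2 : (2 : F) ≠ 0)
    {u k t k' t' : F} (hP : k ^ 2 - a * t ^ 2 = a * (1 - u ^ 2))
    (hQ : k' ^ 2 - a * t' ^ 2 = a * (1 - u ^ 2)) :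
    ∃ x y : F, x ^ 2 - a * y ^ 2 ≠ 0 ∧
      !![k', u + t'; a * (u - t'), -k'] * !![x, y; a * y, x]
        = !![x, y; a * y, x] * !![k, u + t; a * (u - t), -k] := by
  have han : a ≠ 0 := ha0 ha
  by_cases hd : (k - k') ^ 2 = a * (t + t') ^ 2
  · obtain ⟨hk, ht⟩ := nsq ha hd
    have hk' : k' = k := by linear_combination -hk
    have ht' : t' = -t := by linear_combination ht
    rw [hk', ht']
    by_cases hc : a * (1 - u ^ 2) = 0
    · have h0 : k ^ 2 = a * t ^ 2 := by linear_combination hP + hc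
      obtain ⟨hk0, ht0⟩ := nsq ha h0
      subst hk0 ht0
      exact ⟨1, 0, by simpa using one_ne_zero, by norm_num⟩
    · refine ⟨2 * k, 2 * t, ?_, ?_⟩
      · have h44 : (2*k) ^ 2 - a * (2*t) ^ 2 = 4 * (a * (1 - u ^ 2)) := by linear_combination 4 * hP
        have h4 : (4 : F) ≠ 0 := by
          have := mul_ne_zero h2 h2
          simp [show (2:F)*2 = 4 by norm_num] at this; exact this
        rw [h44]
        exact mul_ne_zero h4 hc
      · ext i j
        fin_cases i <;> fin_cases j <;>
          simp [Matrix.mul_apply, Fin.sum_univ_two] <;> ring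
  · refine ⟨a * (t + t'), k - k', ?_, ?_⟩
    · have : (a * (t + t')) ^ 2 - a * (k - k') ^ 2 = a * (a * (t + t') ^ 2 - (k - k') ^ 2) := by
        ring
      rw [this]
      exact mul_ne_zero han (fun h => hd (by linear_combination -h))
    · ext i j
      fin_cases i <;> fin_cases j <;>
        simp [Matrix.mul_apply, Fin.sum_univ_two] <;>
        (first | ring1 | linear_combination hP - hQ | linear_combination hQ - hP |
          linear_combination a * (hP - hQ) | linear_combination a * (hQ - hP))

/-- shape matrices commute with M -/
lemma shapeComm {a x y : F} :
    !![x, y; a * y, x] * !![0, 1; a, 0] = !![0, 1; a, 0] * !![x, y; a * y, x] := by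
  ext i j
  fin_cases i <;> fin_cases j <;> simp [Matrix.mul_apply, Fin.sum_univ_two] <;> ring



variable {p : ℕ} [Fact p.Prime]

lemma two_ne (hodd : Odd p) : (2 : ZMod p) ≠ 0 := by
  have hp : p.Prime := Fact.out
  intro h
  have h2 : ((2 : ℕ) : ZMod p) = 0 := by exact_mod_cast h
  have hdvd : p ∣ 2 := (CharP.cast_eq_zero_iff (ZMod p) p 2).mp h2
  have : p = 2 := (Nat.prime_dvd_prime_iff_eq hp Nat.prime_two).mp hdvd
  rw [this] at hodd
  simp [Nat.odd_iff] at hodd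

lemma normExists (hodd : Odd p) {a : ZMod p} (han : a ≠ 0) (c : ZMod p) :
    ∃ k t : ZMod p, k ^ 2 - a * t ^ 2 = c := by
  obtain ⟨k, t, h⟩ := FiniteField.exists_root_sum_quadratic
    (f := Polynomial.X ^ 2 - Polynomial.C c) (g := Polynomial.C (-a) * Polynomial.X ^ 2)
    (Polynomial.degree_X_pow_sub_C (by norm_num) c)
    (Polynomial.degree_C_mul_X_pow 2 (neg_ne_zero.mpr han))
    (by rw [ZMod.card]; exact Nat.odd_iff.mp hodd)
  refine ⟨k, t, ?_⟩
  simp at h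
  linear_combination h

lemma cardSol (hodd : Odd p) {a : ZMod p} (ha : ∀ b : ZMod p, b ^ 2 ≠ a)
    {k₀ t₀ c : ZMod p} (hc : c ≠ 0) (h₀ : k₀ ^ 2 - a * t₀ ^ 2 = c) :
    Nat.card {v : ZMod p × ZMod p // v.1 ^ 2 - a * v.2 ^ 2 = c} = p + 1 := by
  have hp : p.Prime := Fact.out
  have h2 : (2 : ZMod p) ≠ 0 := two_ne hodd
  have hw : ∀ s : ZMod p, 1 - a * s ^ 2 ≠ 0 := by
    intro s h
    have hs : s ≠ 0 := by rintro rfl; simp at h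
    exact ha s⁻¹ (by field_simp; (first | linear_combination h | linear_combination -h | linear_combination 2*h | linear_combination -2*h))
  set xs : Option (ZMod p) → ZMod p :=
    fun o => match o with | none => -1 | some s => (1 + a * s ^ 2) * (1 - a * s ^ 2)⁻¹ with hxs
  set ys : Option (ZMod p) → ZMod p :=
    fun o => match o with | none => 0 | some s => 2 * s * (1 - a * s ^ 2)⁻¹ with hys
  have hnorm : ∀ o, xs o ^ 2 - a * ys o ^ 2 = 1 := by
    rintro (_ | s)
    · simp [hxs, hys]
    · show ((1 + a * s ^ 2) * (1 - a * s ^ 2)⁻¹) ^ 2 - a * (2 * s * (1 - a * s ^ 2)⁻¹) ^ 2 = 1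
      have hws := hw s
      field_simp
      ring
  have hxne : ∀ s : ZMod p, xs (some s) ≠ -1 := by
    intro s h
    show False
    have h' : (1 + a * s ^ 2) * (1 - a * s ^ 2)⁻¹ = -1 := h
    rw [mul_inv_eq_iff_eq_mul₀ (hw s)] at h'
    exact h2 (by linear_combination h')
  have hrec : ∀ s : ZMod p, ys (some s) * (xs (some s) + 1)⁻¹ = s := by
    intro s
    show 2 * s * (1 - a * s ^ 2)⁻¹ * ((1 + a * s ^ 2) * (1 - a * s ^ 2)⁻¹ + 1)⁻¹ = s
    have hws := hw s
    have hplus : (1 + a * s ^ 2) * (1 - a * s ^ 2)⁻¹ + 1 = 2 * (1 - a * s ^ 2)⁻¹ := by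
      field_simp
      ring
    rw [hplus]
    field_simp
    exact mul_div_cancel_right₀ s (by intro h; exact hws (by linear_combination h))
  set f : Option (ZMod p) → {v : ZMod p × ZMod p // v.1 ^ 2 - a * v.2 ^ 2 = c} :=
    fun o => ⟨(k₀ * xs o + a * t₀ * ys o, t₀ * xs o + k₀ * ys o), by
      linear_combination (k₀ ^ 2 - a * t₀ ^ 2) * hnorm o + h₀⟩ with hf
  have hbij : Function.Bijective f := by
    constructor
    · intro o o' h
      have h1 : k₀ * xs o + a * t₀ * ys o = k₀ * xs o' + a * t₀ * ys o' :=
        congrArg (fun v => v.1.1) h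
      have h2' : t₀ * xs o + k₀ * ys o = t₀ * xs o' + k₀ * ys o' :=
        congrArg (fun v => v.1.2) h
      have hxx : xs o = xs o' := by
        have : c * (xs o - xs o') = 0 := by linear_combination k₀ * h1 - a * t₀ * h2' + (xs o' - xs o) * h₀
        have := (mul_eq_zero.mp this).resolve_left hc
        linear_combination this
      have hyy : ys o = ys o' := by
        have : c * (ys o - ys o') = 0 := by linear_combination k₀ * h2' - t₀ * h1 + (ys o' - ys o) * h₀
        have := (mul_eq_zero.mp this).resolve_left hc
        linear_combination this
      match o, o' with
      | none, none => rfl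
      | none, some s => exact absurd hxx.symm (hxne s)
      | some s, none => exact absurd hxx (hxne s)
      | some s, some s' => 
        have : s = s' := by rw [← hrec s, ← hrec s', hxx, hyy]
        rw [this]
    · rintro ⟨⟨k, t⟩, hkt⟩
      simp only at hkt
      obtain ⟨X, hX⟩ : ∃ X : ZMod p, X = (k₀ * k - a * t₀ * t) / c := ⟨_, rfl⟩
      obtain ⟨Y, hY⟩ : ∃ Y : ZMod p, Y = (k₀ * t - t₀ * k) / c := ⟨_, rfl⟩
      have hXY1 : k₀ * X + a * t₀ * Y = k := by
        rw [hX, hY]; field_simp; linear_combination k * h₀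
      have hXY2 : t₀ * X + k₀ * Y = t := by
        rw [hX, hY]; field_simp; linear_combination t * h₀
      have hN : X ^ 2 - a * Y ^ 2 = 1 := by
        rw [hX, hY]; field_simp; linear_combination (k ^ 2 - a * t ^ 2) * h₀ + c * hkt
      by_cases hXm : X = -1
      · have hY0 : Y = 0 := by
          rw [hXm] at hN
          have : a * Y ^ 2 = 0 := by linear_combination -hN
          have := (mul_eq_zero.mp this).resolve_left (fun h => ha 0 (by simp [h]))
          exact pow_eq_zero_iff two_ne_zero |>.mp this
        refine ⟨none, ?_⟩
        apply Subtype.ext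
        show (k₀ * xs none + a * t₀ * ys none, t₀ * xs none + k₀ * ys none) = (k, t)
        rw [hXm, hY0] at hXY1 hXY2
        show (k₀ * (-1) + a * t₀ * 0, t₀ * (-1) + k₀ * 0) = (k, t)
        rw [Prod.mk.injEq]
        exact ⟨by linear_combination hXY1, by linear_combination hXY2⟩
      · have hX1 : X + 1 ≠ 0 := fun h => hXm (by linear_combination h)
        obtain ⟨s, hsdef⟩ : ∃ s : ZMod p, s = Y * (X + 1)⁻¹ := ⟨_, rfl⟩
        have hws := hw s
        have hden : 1 - a * s ^ 2 = 2 * (X + 1)⁻¹ := by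
          rw [hsdef]
          field_simp
          (first | linear_combination hN | linear_combination -hN | linear_combination 2*hN |
            linear_combination -2*hN | linear_combination (X+1)*hN | linear_combination -(X+1)*hN)
        have hnum : 1 + a * s ^ 2 = 2 * X * (X + 1)⁻¹ := by
          rw [hsdef]
          field_simp
          (first | linear_combination hN | linear_combination -hN | linear_combination 2*hN |
            linear_combination -2*hN | linear_combination (X+1)*hN | linear_combination -(X+1)*hN)
        have hxsX : xs (some s) = X := by
          show (1 + a * s ^ 2) * (1 - a * s ^ 2)⁻¹ = X
          rw [hnum, hden]
          field_simp
        have hysY : ys (some s) = Y := by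
          show 2 * s * (1 - a * s ^ 2)⁻¹ = Y
          rw [hden, hsdef]
          field_simp
        refine ⟨some s, Subtype.ext ?_⟩
        show (k₀ * xs (some s) + a * t₀ * ys (some s), t₀ * xs (some s) + k₀ * ys (some s)) = (k, t)
        rw [hxsX, hysY, Prod.mk.injEq]
        exact ⟨hXY1, hXY2⟩
  rw [← Nat.card_eq_of_bijective f hbij]
  haveI : NeZero p := ⟨hp.ne_zero⟩
  rw [Nat.card_eq_fintype_card, Fintype.card_option, ZMod.card]


end ConjOrb

theorem conjugation_orbits_on_square_roots (p : ℕ) (hp : p.Prime) (hodd : Odd p)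
    (a : ZMod p) (ha : ¬ ∃ b : ZMod p, b ^ 2 = a)
    (φ : GL (Fin 2) (ZMod p))
    (hφ : (φ : Matrix (Fin 2) (Fin 2) (ZMod p)) = !![0, 1; a, 0]) :
    -- the conjugation action of the centralizer of φ on S = {ψ : ψ² = φ²} has exactly p orbits
    Nat.card (Quot fun ψ₁ ψ₂ : {ψ : GL (Fin 2) (ZMod p) // ψ ^ 2 = φ ^ 2} =>
        ∃ γ : GL (Fin 2) (ZMod p), γ * φ = φ * γ ∧ ψ₂.1 = γ * ψ₁.1 * γ⁻¹) = p ∧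
    -- the orbit of φ is a singleton
    Nat.card {ψ : {ψ : GL (Fin 2) (ZMod p) // ψ ^ 2 = φ ^ 2} //
        ∃ γ : GL (Fin 2) (ZMod p), γ * φ = φ * γ ∧ ψ.1.1 = γ * φ * γ⁻¹} = 1 ∧
    -- the orbit of -φ is a singleton
    Nat.card {ψ : {ψ : GL (Fin 2) (ZMod p) // ψ ^ 2 = φ ^ 2} //
        ∃ γ : GL (Fin 2) (ZMod p), γ * φ = φ * γ ∧ ψ.1.1 = γ * (-φ) * γ⁻¹} = 1 ∧
    -- every other orbit has exactly p + 1 elements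
    ∀ ψ₀ : {ψ : GL (Fin 2) (ZMod p) // ψ ^ 2 = φ ^ 2}, ψ₀.1 ≠ φ → ψ₀.1 ≠ -φ →
      Nat.card {ψ : {ψ : GL (Fin 2) (ZMod p) // ψ ^ 2 = φ ^ 2} //
          ∃ γ : GL (Fin 2) (ZMod p), γ * φ = φ * γ ∧ ψ.1.1 = γ * ψ₀.1 * γ⁻¹} = p + 1 := by
  haveI : Fact p.Prime := ⟨hp⟩
  have ha' : ∀ b : ZMod p, b ^ 2 ≠ a := fun b h => ha ⟨b, h⟩
  have han : a ≠ 0 := ConjOrb.ha0 ha'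
  have h2 : (2 : ZMod p) ≠ 0 := ConjOrb.two_ne hodd
  have hMM : ((φ ^ 2 : GL (Fin 2) (ZMod p)) : Matrix (Fin 2) (Fin 2) (ZMod p)) = !![a, 0; 0, a] := by
    rw [Units.val_pow_eq_pow_val, sq, hφ]
    ext i j
    fin_cases i <;> fin_cases j <;> simp [Matrix.mul_apply, Fin.sum_univ_two]
  have hS : ∀ ψ : GL (Fin 2) (ZMod p), ψ ^ 2 = φ ^ 2 ↔
      (ψ : Matrix (Fin 2) (Fin 2) (ZMod p)) * (ψ : Matrix (Fin 2) (Fin 2) (ZMod p))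
        = !![a, 0; 0, a] := by
    intro ψ
    rw [Units.ext_iff, hMM, Units.val_pow_eq_pow_val, sq]
  have mkGL : ∀ G : Matrix (Fin 2) (Fin 2) (ZMod p), G.det ≠ 0 →
      ∃ γ : GL (Fin 2) (ZMod p), (γ : Matrix (Fin 2) (Fin 2) (ZMod p)) = G :=
    fun G h => ⟨((Matrix.isUnit_iff_isUnit_det G).mpr (isUnit_iff_ne_zero.mpr h)).unit,
      IsUnit.unit_spec _⟩
  have hUinv : ∀ γ ψ₁ ψ₂ : GL (Fin 2) (ZMod p), γ * φ = φ * γ → ψ₂ = γ * ψ₁ * γ⁻¹ →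
      ConjOrb.Uf a (ψ₂ : Matrix (Fin 2) (Fin 2) (ZMod p)) = ConjOrb.Uf a ψ₁ := by
    intro γ ψ₁ ψ₂ hcomm hconj
    have hmat : (ψ₂ : Matrix (Fin 2) (Fin 2) (ZMod p))
        = (γ : Matrix (Fin 2) (Fin 2) (ZMod p)) * ψ₁ * ((γ⁻¹ : GL (Fin 2) (ZMod p)) : Matrix (Fin 2) (Fin 2) (ZMod p)) := by
      rw [hconj, Units.val_mul, Units.val_mul]
    rw [hmat]
    refine ConjOrb.U_conj ?_ (Units.inv_mul γ)
    rw [← hφ]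
    have := congrArg Units.val hcomm
    simpa [Units.val_mul] using this
  have hconjL : ∀ ψ₁ ψ₂ : GL (Fin 2) (ZMod p), ψ₁ ^ 2 = φ ^ 2 → ψ₂ ^ 2 = φ ^ 2 →
      ConjOrb.Uf a (ψ₁ : Matrix (Fin 2) (Fin 2) (ZMod p)) = ConjOrb.Uf a ψ₂ →
      ∃ γ : GL (Fin 2) (ZMod p), γ * φ = φ * γ ∧ ψ₂ = γ * ψ₁ * γ⁻¹ := by
    intro ψ₁ ψ₂ hs1 hs2 hU
    obtain ⟨k, t, u, hPe, hPc, hPu⟩ := ConjOrb.normalForm ha' h2 ((hS ψ₁).mp hs1)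
    obtain ⟨k', t', u', hQe, hQc, hQu⟩ := ConjOrb.normalForm ha' h2 ((hS ψ₂).mp hs2)
    have huu : u' = u := by rw [← hPu, ← hQu, hU]
    rw [huu] at hQe hQc
    obtain ⟨x, y, hdet, hmul⟩ := ConjOrb.conjExists ha' h2 hPc hQc
    obtain ⟨γ, hγ⟩ := mkGL !![x, y; a * y, x]
      (by rw [Matrix.det_fin_two_of]; intro h; exact hdet (by linear_combination h))
    have hcomm : γ * φ = φ * γ := by
      apply Units.ext
      rw [Units.val_mul, Units.val_mul]
      show (γ : Matrix (Fin 2) (Fin 2) (ZMod p)) * φ = (φ : Matrix (Fin 2) (Fin 2) (ZMod p)) * γ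
      rw [hγ, hφ]
      exact ConjOrb.shapeComm
    have hmain : ψ₂ * γ = γ * ψ₁ := by
      apply Units.ext
      rw [Units.val_mul, Units.val_mul]
      show (ψ₂ : Matrix (Fin 2) (Fin 2) (ZMod p)) * γ = (γ : Matrix (Fin 2) (Fin 2) (ZMod p)) * ψ₁
      rw [hγ, hQe, hPe]
      exact hmul
    refine ⟨γ, hcomm, ?_⟩
    rw [← hmain, mul_inv_cancel_right]
  have hmk : ∀ u k t : ZMod p, k ^ 2 - a * t ^ 2 = a * (1 - u ^ 2) →
      ∃ ψ : GL (Fin 2) (ZMod p),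
        (ψ : Matrix (Fin 2) (Fin 2) (ZMod p)) = !![k, u + t; a * (u - t), -k] ∧ ψ ^ 2 = φ ^ 2 := by
    intro u k t h
    obtain ⟨ψ, hψ⟩ := mkGL !![k, u + t; a * (u - t), -k]
      (by rw [ConjOrb.detLemma h]; exact neg_ne_zero.mpr han)
    exact ⟨ψ, hψ, (hS ψ).mpr (by rw [hψ]; exact ConjOrb.sqLemma h)⟩
  refine ⟨?_, ?_, ?_, ?_⟩
  · -- number of orbits is p
    have hsound : ∀ ψ₁ ψ₂ : {ψ : GL (Fin 2) (ZMod p) // ψ ^ 2 = φ ^ 2},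
        (∃ γ : GL (Fin 2) (ZMod p), γ * φ = φ * γ ∧ ψ₂.1 = γ * ψ₁.1 * γ⁻¹) →
        ConjOrb.Uf a (ψ₁.1 : Matrix (Fin 2) (Fin 2) (ZMod p)) = ConjOrb.Uf a ψ₂.1 := by
      rintro ψ₁ ψ₂ ⟨γ, hc, hj⟩
      exact (hUinv γ ψ₁.1 ψ₂.1 hc hj).symm
    refine (Nat.card_eq_of_bijective
      (Quot.lift (fun ψ => ConjOrb.Uf a (ψ.1 : Matrix (Fin 2) (Fin 2) (ZMod p))) hsound)
      ⟨?_, ?_⟩).trans (Nat.card_zmod p)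
    · intro q₁ q₂
      induction q₁ using Quot.ind with | _ ψ₁ => ?_
      induction q₂ using Quot.ind with | _ ψ₂ => ?_
      intro h
      exact Quot.sound (hconjL ψ₁.1 ψ₂.1 ψ₁.2 ψ₂.2 h)
    · intro u
      obtain ⟨k, t, hkt⟩ := ConjOrb.normExists hodd han (a * (1 - u ^ 2))
      obtain ⟨ψ, hψm, hψS⟩ := hmk u k t hkt
      refine ⟨Quot.mk _ ⟨ψ, hψS⟩, ?_⟩
      show ConjOrb.Uf a (ψ : Matrix (Fin 2) (Fin 2) (ZMod p)) = u
      rw [hψm]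
      exact ConjOrb.ULemma h2 han
  · -- orbit of φ is a singleton
    rw [Nat.card_eq_one_iff_unique]
    constructor
    · constructor
      intro x y
      have hx : x.1.1 = φ := by
        obtain ⟨γ, hcγ, hxe⟩ := x.2
        refine Units.ext ?_
        rw [hxe, ← Units.val_mul, ← Units.val_mul, hcγ, mul_inv_cancel_right]
      have hy : y.1.1 = φ := by
        obtain ⟨γ, hcγ, hye⟩ := y.2
        refine Units.ext ?_
        rw [hye, ← Units.val_mul, ← Units.val_mul, hcγ, mul_inv_cancel_right]
      exact Subtype.ext (Subtype.ext (hx.trans hy.symm))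
    · exact ⟨⟨⟨φ, rfl⟩, 1, by simp⟩⟩
  · -- orbit of -φ is a singleton
    rw [Nat.card_eq_one_iff_unique]
    constructor
    · constructor
      intro x y
      have hx : x.1.1 = -φ := by
        obtain ⟨γ, hcγ, hxe⟩ := x.2
        refine Units.ext ?_
        rw [hxe, ← Units.val_neg, ← Units.val_mul, ← Units.val_mul, mul_neg, neg_mul, hcγ,
          mul_inv_cancel_right]
      have hy : y.1.1 = -φ := by
        obtain ⟨γ, hcγ, hye⟩ := y.2
        refine Units.ext ?_
        rw [hye, ← Units.val_neg, ← Units.val_mul, ← Units.val_mul, mul_neg, neg_mul, hcγ,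
          mul_inv_cancel_right]
      exact Subtype.ext (Subtype.ext (hx.trans hy.symm))
    · exact ⟨⟨⟨-φ, neg_sq φ⟩, 1, by simp⟩⟩
  · -- other orbits have p + 1 elements
    intro ψ₀ hne1 hne2
    obtain ⟨k₀, t₀, u, hPe, hPc, hPu⟩ := ConjOrb.normalForm ha' h2 ((hS ψ₀.1).mp ψ₀.2)
    have hcne : a * (1 - u ^ 2) ≠ 0 := by
      intro h0
      obtain ⟨hk0, ht0⟩ := ConjOrb.nsq ha'
        (show k₀ ^ 2 = a * t₀ ^ 2 by linear_combination hPc + h0)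
      rw [hk0, ht0] at hPe
      have hu2 : (u - 1) * (u + 1) = 0 := by
        have h1 := (mul_eq_zero.mp h0).resolve_left han
        linear_combination -h1
      rcases mul_eq_zero.mp hu2 with h | h
      · apply hne1
        apply Units.ext
        have hu1 : u = 1 := by linear_combination h
        rw [hφ, hPe, hu1]
        norm_num
      · apply hne2
        apply Units.ext
        have hu1 : u = -1 := by linear_combination h
        rw [hPe, hu1, Units.val_neg, hφ]
        ext i j
        fin_cases i <;> fin_cases j <;> simp
    have hcanon : ∀ ψ : {ψ : GL (Fin 2) (ZMod p) // ψ ^ 2 = φ ^ 2},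
        (∃ γ : GL (Fin 2) (ZMod p), γ * φ = φ * γ ∧
          (ψ.1 : Matrix (Fin 2) (Fin 2) (ZMod p)) = (γ : Matrix (Fin 2) (Fin 2) (ZMod p)) * (ψ₀.1 : Matrix (Fin 2) (Fin 2) (ZMod p)) * ((γ⁻¹ : GL (Fin 2) (ZMod p)) : Matrix (Fin 2) (Fin 2) (ZMod p))) →
        ((ψ.1 : Matrix (Fin 2) (Fin 2) (ZMod p)) =
            !![(ψ.1 : Matrix (Fin 2) (Fin 2) (ZMod p)) 0 0,
               (ψ.1 : Matrix (Fin 2) (Fin 2) (ZMod p)) 0 1;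
               a * (u - ((ψ.1 : Matrix (Fin 2) (Fin 2) (ZMod p)) 0 1 - u)),
               -((ψ.1 : Matrix (Fin 2) (Fin 2) (ZMod p)) 0 0)] ∧
          ((ψ.1 : Matrix (Fin 2) (Fin 2) (ZMod p)) 0 0) ^ 2
            - a * ((ψ.1 : Matrix (Fin 2) (Fin 2) (ZMod p)) 0 1 - u) ^ 2 = a * (1 - u ^ 2)) := by
      rintro ψ ⟨γ, hcγ, hje⟩
      have hje' : ψ.1 = γ * ψ₀.1 * γ⁻¹ :=
        Units.ext (by rw [hje, Units.val_mul, Units.val_mul])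
      have hUψ : ConjOrb.Uf a (ψ.1 : Matrix (Fin 2) (Fin 2) (ZMod p)) = u :=
        (hUinv γ ψ₀.1 ψ.1 hcγ hje').trans hPu
      obtain ⟨k, t, u'', he, hc'', hu''⟩ := ConjOrb.normalForm ha' h2 ((hS ψ.1).mp ψ.2)
      have huu : u'' = u := by rw [← hu'', hUψ]
      rw [huu] at he hc''
      have hk : (ψ.1 : Matrix (Fin 2) (Fin 2) (ZMod p)) 0 0 = k := by rw [he]; simp
      have ht : (ψ.1 : Matrix (Fin 2) (Fin 2) (ZMod p)) 0 1 = u + t := by rw [he]; simp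
      constructor
      · rw [hk, ht, show u - (u + t - u) = u - t from by ring]
        exact he
      · rw [hk, ht, show u + t - u = t from by ring]
        exact hc''
    refine (Nat.card_eq_of_bijective (fun ψ =>
      (⟨((ψ.1.1 : Matrix (Fin 2) (Fin 2) (ZMod p)) 0 0,
         (ψ.1.1 : Matrix (Fin 2) (Fin 2) (ZMod p)) 0 1 - u), (hcanon ψ.1 ψ.2).2⟩ :
        {v : ZMod p × ZMod p // v.1 ^ 2 - a * v.2 ^ 2 = a * (1 - u ^ 2)}))
      ⟨?_, ?_⟩).trans (ConjOrb.cardSol hodd ha' hcne hPc)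
    · intro x y hxy
      have h1 : (x.1.1 : Matrix (Fin 2) (Fin 2) (ZMod p)) 0 0
          = (y.1.1 : Matrix (Fin 2) (Fin 2) (ZMod p)) 0 0 :=
        congrArg (fun v => v.1.1) hxy
      have h2' : (x.1.1 : Matrix (Fin 2) (Fin 2) (ZMod p)) 0 1
          = (y.1.1 : Matrix (Fin 2) (Fin 2) (ZMod p)) 0 1 := by
        have := congrArg (fun v => v.1.2) hxy
        simp only at this
        linear_combination this
      have hmat : (x.1.1 : Matrix (Fin 2) (Fin 2) (ZMod p))
          = (y.1.1 : Matrix (Fin 2) (Fin 2) (ZMod p)) := by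
        rw [(hcanon x.1 x.2).1, (hcanon y.1 y.2).1, h1, h2']
      exact Subtype.ext (Subtype.ext (Units.ext hmat))
    · rintro ⟨⟨k, t⟩, hkt⟩
      simp only at hkt
      obtain ⟨ψ, hψm, hψS⟩ := hmk u k t hkt
      have hUψ : ConjOrb.Uf a (ψ : Matrix (Fin 2) (Fin 2) (ZMod p)) = u := by
        rw [hψm]; exact ConjOrb.ULemma h2 han
      obtain ⟨γ, hcγ, hje⟩ := hconjL ψ₀.1 ψ ψ₀.2 hψS (hPu.trans hUψ.symm)
      refine ⟨⟨⟨ψ, hψS⟩, γ, hcγ, ?_⟩, ?_⟩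
      · show (ψ : Matrix (Fin 2) (Fin 2) (ZMod p)) = _
        rw [hje, Units.val_mul, Units.val_mul]
      apply Subtype.ext
      show ((ψ : Matrix (Fin 2) (Fin 2) (ZMod p)) 0 0,
        (ψ : Matrix (Fin 2) (Fin 2) (ZMod p)) 0 1 - u) = (k, t)
      rw [hψm]
      simp
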